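/- Let C ≥ 0, R > 0 and m ∈ ℝ, and let (f_k)_{k≥0} be a sequence of complex numbers with |f_k| ≤ C·R^k·k!/(k+1)^m for all k. Then there exists C' ≥ 0 such that for every integer N ≥ 1 one has |∑_{k=0}^{⌊eN/(3R)⌋} N^{-k}·f_k| ≤ C'. -/

import Mathlib

/-- Summation of an analytic symbol sequence: the partial sums up to `⌊eN/(3R)⌋`
are uniformly bounded in `N`. -/
theorem analytic_symbol_summation
    (C R m : ℝ) (hC : 0 ≤ C) (hR : 0 < R) (f : ℕ → ℂ)
    (hf : ∀ k : ℕ, ‖f k‖ ≤ C * R ^ k * (Nat.factorial k) / ((k : ℝ) + 1) ^ m) :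
    ∃ C' : ℝ, 0 ≤ C' ∧ ∀ N : ℕ, 1 ≤ N →
      ‖∑ k ∈ Finset.range (⌊Real.exp 1 * N / (3 * R)⌋₊ + 1),
        ((N : ℂ))⁻¹ ^ k * f k‖ ≤ C' := by
  set r : ℝ := Real.exp 1 / 3 with hrdef
  have hr0 : 0 < r := div_pos (Real.exp_pos 1) (by norm_num)
  have hr1 : r < 1 := by
    rw [hrdef, div_lt_one (by norm_num : (0:ℝ) < 3)]
    have := Real.exp_one_lt_d9; linarith
  set n : ℕ := ⌈|m|⌉₊ with hndef
  have h1 : Summable (fun k : ℕ => (k:ℝ)^n * r^k) :=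
    summable_pow_mul_geometric_of_norm_lt_one n
      (by rw [Real.norm_eq_abs, abs_of_pos hr0]; exact hr1)
  have h2 : Summable (fun k : ℕ => ((k:ℝ)+1)^n * r^(k+1)) := by
    apply (h1.comp_injective (add_left_injective 1)).congr
    intro k
    simp only [Function.comp_apply]
    push_cast
    ring
  have hsum : Summable (fun k : ℕ => C * (((k:ℝ)+1)^n * r^k)) := by
    apply (h2.mul_left (C/r)).congr
    intro k
    rw [pow_succ]
    field_simp
  refine ⟨∑' k : ℕ, C * (((k:ℝ)+1)^n * r^k),
    tsum_nonneg (fun k => by positivity), ?_⟩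
  intro N hN
  have hN0 : (0:ℝ) < N := by exact_mod_cast hN
  calc ‖∑ k ∈ Finset.range (⌊Real.exp 1 * N / (3 * R)⌋₊ + 1),
        ((N : ℂ))⁻¹ ^ k * f k‖
      ≤ ∑ k ∈ Finset.range (⌊Real.exp 1 * N / (3 * R)⌋₊ + 1),
          ‖((N : ℂ))⁻¹ ^ k * f k‖ := norm_sum_le _ _
    _ ≤ ∑ k ∈ Finset.range (⌊Real.exp 1 * N / (3 * R)⌋₊ + 1),
          C * (((k:ℝ)+1)^n * r^k) := by
        apply Finset.sum_le_sum
        intro k hk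
        rw [Finset.mem_range, Nat.lt_succ_iff] at hk
        have hkx : (k:ℝ) ≤ Real.exp 1 * N / (3*R) :=
          le_trans (Nat.cast_le.mpr hk) (Nat.floor_le (by positivity))
        have hRk : R * k ≤ Real.exp 1 * N / 3 := by
          have h := mul_le_mul_of_nonneg_left hkx hR.le
          have heq : R * (Real.exp 1 * N / (3*R)) = Real.exp 1 * N / 3 := by
            field_simp
          linarith
        have hfact : (Nat.factorial k : ℝ) ≤ (k:ℝ)^k := by
          exact_mod_cast Nat.factorial_le_pow k
        have hgeo : (1/(N:ℝ))^k * (R^k * (Nat.factorial k)) ≤ r^k := by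
          calc (1/(N:ℝ))^k * (R^k * (Nat.factorial k))
              ≤ (1/(N:ℝ))^k * (R^k * (k:ℝ)^k) := by gcongr
            _ = (R * k / (N:ℝ))^k := by
                rw [← mul_pow, ← mul_pow]; congr 1; ring
            _ ≤ r^k := by
                apply pow_le_pow_left₀ (by positivity)
                rw [div_le_iff₀ hN0]
                have : r * N = Real.exp 1 * N / 3 := by rw [hrdef]; ring
                linarith
        have hpow : (1:ℝ)/((k:ℝ)+1)^m ≤ ((k:ℝ)+1)^n := by
          rw [one_div, ← Real.rpow_natCast ((k:ℝ)+1) n, ← Real.rpow_neg (by positivity)]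
          apply Real.rpow_le_rpow_of_exponent_le
          · linarith [Nat.cast_nonneg (α := ℝ) k]
          · calc -m ≤ |m| := neg_le_abs m
              _ ≤ (n:ℝ) := Nat.le_ceil _
        calc ‖((N : ℂ))⁻¹ ^ k * f k‖
            = (1/(N:ℝ))^k * ‖f k‖ := by
              rw [norm_mul, norm_pow, norm_inv, Complex.norm_natCast, one_div]
          _ ≤ (1/(N:ℝ))^k * (C * R ^ k * (Nat.factorial k) / ((k : ℝ) + 1) ^ m) := by
              gcongr
              exact hf k
          _ = C * ((1/(N:ℝ))^k * (R^k * (Nat.factorial k))) * (1/((k:ℝ)+1)^m) := by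
              ring
          _ ≤ C * r^k * (((k:ℝ)+1)^n) := by gcongr
          _ = C * (((k:ℝ)+1)^n * r^k) := by ring
    _ ≤ ∑' k : ℕ, C * (((k:ℝ)+1)^n * r^k) :=
        Summable.sum_le_tsum _ (fun k _ => by positivity) hsum
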